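/- Submodular-type inequality for shard heights: Let f be a forcing dominant function on shards of the braid arrangement in R^n and let I be an upper ideal of the forcing order. Let R, R' ⊆ [n] with R \ {k} = R' \ {k'}, k ∈ R \ R', k' ∈ R' \ R, k < k'. Define h(R) = Σ_{Σ ∈ I} f(Σ)γ(Σ,R). Then h(R) + h(R') ≥ h(R∩R') + h(R∪R'), with equality if and only if the shard Σ• = Σ(k,k', (R∩R') ∩ ]k,k'[) does not belong to I. -/

import Mathlib

/-- The contribution `γ(Σ(i,j,S), R)`. -/
def gamma (i j : ℕ) (S R : Finset ℕ) : ℕ :=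
  if (R ∩ {i, j}).card = 1 ∧ S = R ∩ Finset.Ioo i j then 1 else 0

/-- The finite set of all shards `(i,j,S)` with `1 ≤ i < j ≤ n`, `S ⊆ ]i,j[`. -/
def shardFinset (n : ℕ) : Finset (ℕ × ℕ × Finset ℕ) :=
  ((Finset.Icc 1 n) ×ˢ (Finset.Icc 1 n) ×ˢ (Finset.Icc 1 n).powerset).filter
    (fun t => t.1 < t.2.1 ∧ t.2.2 ⊆ Finset.Ioo t.1 t.2.1)

/-- `f` is forcing dominant: for every shard `Σ`, `f(Σ)` strictly exceeds the sum
of `f(Σ')` over the shards `Σ' ≺ Σ`, i.e. over the shards `Σ'` strictly forced by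
`Σ` (meaning `Σ'.i ≤ Σ.i < Σ.j ≤ Σ'.j` and `Σ.S = Σ'.S ∩ ]Σ.i,Σ.j[`, `Σ' ≠ Σ`). -/
def ForcingDominant (n : ℕ) (f : ℕ × ℕ × Finset ℕ → ℝ) : Prop :=
  ∀ t ∈ shardFinset n,
    ∑ t' ∈ (shardFinset n).filter
        (fun t' => t' ≠ t ∧ t'.1 ≤ t.1 ∧ t.2.1 ≤ t'.2.1 ∧
          t.2.2 = t'.2.2 ∩ Finset.Ioo t.1 t.2.1), f t' < f t

/-- The height function `h_I(R) = Σ_{Σ ∈ I} f(Σ)·γ(Σ,R)`. -/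
def quotientHeight (f : ℕ × ℕ × Finset ℕ → ℝ) (I : Finset (ℕ × ℕ × Finset ℕ))
    (R : Finset ℕ) : ℝ :=
  ∑ t ∈ I, f t * (gamma t.1 t.2.1 t.2.2 R : ℝ)

lemma gamma_le_one (i j : ℕ) (S R : Finset ℕ) : gamma i j S R ≤ 1 := by
  unfold gamma; split <;> simp

lemma gamma_eq_of_inter (i j : ℕ) (S X Y : Finset ℕ)
    (h1 : X ∩ {i, j} = Y ∩ {i, j}) (h2 : X ∩ Finset.Ioo i j = Y ∩ Finset.Ioo i j) :
    gamma i j S X = gamma i j S Y := by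
  unfold gamma; rw [h1, h2]

lemma gamma_insert (i j x : ℕ) (S X : Finset ℕ) (hx1 : x ∉ ({i, j} : Finset ℕ))
    (hx2 : x ∉ Finset.Ioo i j) :
    gamma i j S (insert x X) = gamma i j S X := by
  apply gamma_eq_of_inter
  · rw [Finset.insert_inter_of_notMem hx1]
  · rw [Finset.insert_inter_of_notMem hx2]

lemma gamma_zero_of_ne (i j k k' : ℕ) (S X E : Finset ℕ) (hik : i ≤ k) (hkj : k' ≤ j)
    (hXE : X ∩ Finset.Ioo k k' = E ∩ Finset.Ioo k k')
    (hne : E ∩ Finset.Ioo k k' ≠ S ∩ Finset.Ioo k k') :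
    gamma i j S X = 0 := by
  rw [gamma, if_neg]
  rintro ⟨-, rfl⟩
  apply hne
  rw [← hXE, Finset.inter_assoc]
  congr 1
  exact (Finset.inter_eq_right.mpr (Finset.Ioo_subset_Ioo hik hkj)).symm

lemma gamma_eq_one_iff (i j : ℕ) (S R : Finset ℕ) :
    gamma i j S R = 1 ↔ (R ∩ {i, j}).card = 1 ∧ S = R ∩ Finset.Ioo i j := by
  unfold gamma; split <;> simp_all

lemma not_mem_pair_Ioo (i j x : ℕ) (hij : i < j) (hx : x ∉ Finset.Icc i j) :
    x ∉ ({i, j} : Finset ℕ) ∧ x ∉ Finset.Ioo i j := by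
  constructor
  · intro h
    rcases Finset.mem_insert.mp h with rfl | h
    · exact hx (Finset.mem_Icc.mpr ⟨le_rfl, hij.le⟩)
    · exact hx (by rw [Finset.mem_singleton.mp h]; exact Finset.mem_Icc.mpr ⟨hij.le, le_rfl⟩)
  · intro h
    exact hx (Finset.mem_Icc.mpr ⟨(Finset.mem_Ioo.mp h).1.le, (Finset.mem_Ioo.mp h).2.le⟩)

lemma g_zero (i j k k' : ℕ) (S E : Finset ℕ) (hij : i < j)
    (hP : ¬ (i ≤ k ∧ k' ≤ j ∧ E ∩ Finset.Ioo k k' = S ∩ Finset.Ioo k k')) :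
    gamma i j S (insert k E) + gamma i j S (insert k' E)
      = gamma i j S E + gamma i j S (insert k (insert k' E)) := by
  by_cases hk1 : k ∈ Finset.Icc i j
  · by_cases hk2 : k' ∈ Finset.Icc i j
    · obtain ⟨hik, -⟩ := Finset.mem_Icc.mp hk1
      obtain ⟨-, hk'j⟩ := Finset.mem_Icc.mp hk2
      have hne : E ∩ Finset.Ioo k k' ≠ S ∩ Finset.Ioo k k' := fun h => hP ⟨hik, hk'j, h⟩
      have hkIoo : k ∉ Finset.Ioo k k' := by simp
      have hk'Ioo : k' ∉ Finset.Ioo k k' := by simp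
      have e1 : (insert k E) ∩ Finset.Ioo k k' = E ∩ Finset.Ioo k k' :=
        Finset.insert_inter_of_notMem hkIoo
      have e2 : (insert k' E) ∩ Finset.Ioo k k' = E ∩ Finset.Ioo k k' :=
        Finset.insert_inter_of_notMem hk'Ioo
      have e3 : (insert k (insert k' E)) ∩ Finset.Ioo k k' = E ∩ Finset.Ioo k k' := by
        rw [Finset.insert_inter_of_notMem hkIoo, e2]
      rw [gamma_zero_of_ne i j k k' S _ E hik hk'j e1 hne,
          gamma_zero_of_ne i j k k' S _ E hik hk'j e2 hne,
          gamma_zero_of_ne i j k k' S _ E hik hk'j rfl hne,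
          gamma_zero_of_ne i j k k' S _ E hik hk'j e3 hne]
    · obtain ⟨h1, h2⟩ := not_mem_pair_Ioo i j k' hij hk2
      rw [gamma_insert i j k' S E h1 h2, Finset.insert_comm,
          gamma_insert i j k' S (insert k E) h1 h2]
      omega
  · obtain ⟨h1, h2⟩ := not_mem_pair_Ioo i j k hij hk1
    rw [gamma_insert i j k S E h1 h2, gamma_insert i j k S (insert k' E) h1 h2]

lemma g_at (k k' : ℕ) (E : Finset ℕ) (hkk : k < k') (hkE : k ∉ E) (hk'E : k' ∉ E) :
    gamma k k' (E ∩ Finset.Ioo k k') (insert k E) = 1 ∧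
    gamma k k' (E ∩ Finset.Ioo k k') (insert k' E) = 1 ∧
    gamma k k' (E ∩ Finset.Ioo k k') E = 0 ∧
    gamma k k' (E ∩ Finset.Ioo k k') (insert k (insert k' E)) = 0 := by
  have hEp : E ∩ ({k, k'} : Finset ℕ) = ∅ := by
    ext x
    simp only [Finset.mem_inter, Finset.mem_insert, Finset.mem_singleton,
      Finset.notMem_empty, iff_false, not_and]
    rintro hx (rfl | rfl)
    · exact hkE hx
    · exact hk'E hx
  have hkIoo : k ∉ Finset.Ioo k k' := by simp
  have hk'Ioo : k' ∉ Finset.Ioo k k' := by simp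
  refine ⟨?_, ?_, ?_, ?_⟩
  · rw [gamma, if_pos]
    refine ⟨?_, (Finset.insert_inter_of_notMem hkIoo).symm⟩
    rw [Finset.insert_inter_of_mem (by simp), hEp]
    simp
  · rw [gamma, if_pos]
    refine ⟨?_, (Finset.insert_inter_of_notMem hk'Ioo).symm⟩
    rw [Finset.insert_inter_of_mem (by simp), hEp]
    simp
  · rw [gamma, if_neg]
    rintro ⟨hc, -⟩
    rw [hEp] at hc
    simp at hc
  · rw [gamma, if_neg]
    rintro ⟨hc, -⟩
    rw [Finset.insert_inter_of_mem (by simp),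
        Finset.insert_inter_of_mem (by simp), hEp] at hc
    simp [hkk.ne] at hc

lemma g_ge (i j k k' : ℕ) (S E : Finset ℕ) (hkE : k ∉ E) (hk'E : k' ∉ E) :
    gamma i j S E + gamma i j S (insert k (insert k' E))
      ≤ gamma i j S (insert k E) + gamma i j S (insert k' E) + 1 := by
  have l1 := gamma_le_one i j S E
  have l2 := gamma_le_one i j S (insert k (insert k' E))
  by_cases h3 : gamma i j S E = 1
  · by_cases h4 : gamma i j S (insert k (insert k' E)) = 1
    · obtain ⟨hc3, hS3⟩ := (gamma_eq_one_iff _ _ _ _).mp h3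
      obtain ⟨hc4, hS4⟩ := (gamma_eq_one_iff _ _ _ _).mp h4
      have hknp : k ∉ ({i, j} : Finset ℕ) := by
        intro hm
        have hss : E ∩ ({i, j} : Finset ℕ) ⊂ (insert k (insert k' E)) ∩ {i, j} := by
          refine (Finset.ssubset_iff_of_subset
            (Finset.inter_subset_inter (by intro x hx; simp [hx]) le_rfl)).mpr ?_
          exact ⟨k, Finset.mem_inter.mpr ⟨Finset.mem_insert_self _ _, hm⟩,
            fun h => hkE (Finset.mem_inter.mp h).1⟩
        have := Finset.card_lt_card hss
        omega
      have hknIoo : k ∉ Finset.Ioo i j := by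
        intro hm
        have hkS : k ∈ S := hS4 ▸ Finset.mem_inter.mpr ⟨by simp, hm⟩
        rw [hS3] at hkS
        exact hkE (Finset.mem_inter.mp hkS).1
      have e1 : gamma i j S (insert k E) = 1 := by
        rw [gamma_insert i j k S E hknp hknIoo]; exact h3
      omega
    · omega
  · omega


/-- Submodular-type inequality for shard heights, with equality iff the shard
`Σ• = Σ(k,k',(R∩R') ∩ ]k,k'[)` does not belong to the upper ideal `I`. -/
theorem stmt14 (n : ℕ) (f : ℕ × ℕ × Finset ℕ → ℝ) (hfpos : ∀ t, 0 < f t)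
    (hdom : ForcingDominant n f)
    (I : Finset (ℕ × ℕ × Finset ℕ)) (hI : I ⊆ shardFinset n)
    (hup : ∀ a ∈ I, ∀ b ∈ shardFinset n,
      (a.1 ≤ b.1 ∧ b.2.1 ≤ a.2.1 ∧ b.2.2 = a.2.2 ∩ Finset.Ioo b.1 b.2.1) → b ∈ I)
    (R R' : Finset ℕ) (hR : R ⊆ Finset.Icc 1 n) (hR' : R' ⊆ Finset.Icc 1 n)
    (k k' : ℕ) (hk : k ∈ R \ R') (hk' : k' ∈ R' \ R) (hkk : k < k')
    (herase : R.erase k = R'.erase k') :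
    quotientHeight f I (R ∩ R') + quotientHeight f I (R ∪ R')
        ≤ quotientHeight f I R + quotientHeight f I R' ∧
    (quotientHeight f I R + quotientHeight f I R'
        = quotientHeight f I (R ∩ R') + quotientHeight f I (R ∪ R')
      ↔ (k, k', (R ∩ R') ∩ Finset.Ioo k k') ∉ I) := by
  classical
  obtain ⟨hkR, hkR'⟩ := Finset.mem_sdiff.mp hk
  obtain ⟨hk'R', hk'R⟩ := Finset.mem_sdiff.mp hk'
  set E := R ∩ R' with hE
  have hkE : k ∉ E := fun h => hkR' (Finset.mem_inter.mp h).2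
  have hk'E : k' ∉ E := fun h => hk'R (Finset.mem_inter.mp h).1
  have hRE : R = insert k E := by
    ext x
    simp only [hE, Finset.mem_insert, Finset.mem_inter]
    constructor
    · intro hx
      rcases eq_or_ne x k with rfl | hne
      · exact Or.inl rfl
      · have hx2 : x ∈ R.erase k := Finset.mem_erase.mpr ⟨hne, hx⟩
        rw [herase] at hx2
        exact Or.inr ⟨hx, (Finset.mem_erase.mp hx2).2⟩
    · rintro (rfl | ⟨h, -⟩)
      · exact hkR
      · exact h
  have hR'E : R' = insert k' E := by
    ext x
    simp only [hE, Finset.mem_insert, Finset.mem_inter]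
    constructor
    · intro hx
      rcases eq_or_ne x k' with rfl | hne
      · exact Or.inl rfl
      · have hx2 : x ∈ R'.erase k' := Finset.mem_erase.mpr ⟨hne, hx⟩
        rw [← herase] at hx2
        exact Or.inr ⟨(Finset.mem_erase.mp hx2).2, hx⟩
    · rintro (rfl | ⟨-, h⟩)
      · exact hk'R'
      · exact h
  have hUE : R ∪ R' = insert k (insert k' E) := by
    rw [hRE, hR'E]
    ext x
    simp only [Finset.mem_union, Finset.mem_insert]
    tauto
  set b : ℕ × ℕ × Finset ℕ := (k, k', E ∩ Finset.Ioo k k') with hb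
  have hbShard : b ∈ shardFinset n := by
    simp only [hb, shardFinset, Finset.mem_filter, Finset.mem_product, Finset.mem_powerset]
    refine ⟨⟨hR hkR, hR' hk'R', fun x hx => ?_⟩, hkk, Finset.inter_subset_right⟩
    exact hR (Finset.mem_inter.mp (Finset.mem_inter.mp hx).1).1
  have key : quotientHeight f I R + quotientHeight f I R'
      - (quotientHeight f I E + quotientHeight f I (R ∪ R'))
      = ∑ t ∈ I, f t * (((gamma t.1 t.2.1 t.2.2 R : ℝ) + (gamma t.1 t.2.1 t.2.2 R' : ℝ))
          - ((gamma t.1 t.2.1 t.2.2 E : ℝ) + (gamma t.1 t.2.1 t.2.2 (R ∪ R') : ℝ))) := by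
    unfold quotientHeight
    rw [← Finset.sum_add_distrib, ← Finset.sum_add_distrib, ← Finset.sum_sub_distrib]
    exact Finset.sum_congr rfl fun t _ => by ring
  by_cases hmem : b ∈ I
  · -- the shard belongs to I : strict inequality
    have hpt : ∀ t ∈ I,
        ((if t = b then 2 * f t else 0)
          + (if t ≠ b ∧ (t.1 ≤ k ∧ k' ≤ t.2.1 ∧
              E ∩ Finset.Ioo k k' = t.2.2 ∩ Finset.Ioo k k') then -f t else 0))
        ≤ f t * (((gamma t.1 t.2.1 t.2.2 R : ℝ) + (gamma t.1 t.2.1 t.2.2 R' : ℝ))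
          - ((gamma t.1 t.2.1 t.2.2 E : ℝ) + (gamma t.1 t.2.1 t.2.2 (R ∪ R') : ℝ))) := by
      intro t ht
      have hij : t.1 < t.2.1 := (Finset.mem_filter.mp (hI ht)).2.1
      rcases eq_or_ne t b with rfl | hne
      · rw [if_pos rfl, if_neg (fun h => h.1 rfl), add_zero]
        obtain ⟨g1, g2, g3, g4⟩ := g_at k k' E hkk hkE hk'E
        show 2 * f b ≤ f b *
          (((gamma k k' (E ∩ Finset.Ioo k k') R : ℝ) + (gamma k k' (E ∩ Finset.Ioo k k') R' : ℝ))
            - ((gamma k k' (E ∩ Finset.Ioo k k') E : ℝ)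
              + (gamma k k' (E ∩ Finset.Ioo k k') (R ∪ R') : ℝ)))
        rw [hUE, hRE, hR'E, g1, g2, g3, g4]
        push_cast
        linarith
      · rw [if_neg hne]
        by_cases hP : t.1 ≤ k ∧ k' ≤ t.2.1 ∧ E ∩ Finset.Ioo k k' = t.2.2 ∩ Finset.Ioo k k'
        · rw [if_pos ⟨hne, hP⟩]
          have hge := g_ge t.1 t.2.1 k k' t.2.2 E hkE hk'E
          have hge' : (gamma t.1 t.2.1 t.2.2 E : ℝ) + (gamma t.1 t.2.1 t.2.2 (R ∪ R') : ℝ)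
              ≤ (gamma t.1 t.2.1 t.2.2 R : ℝ) + (gamma t.1 t.2.1 t.2.2 R' : ℝ) + 1 := by
            rw [hUE, hRE, hR'E]
            exact_mod_cast hge
          nlinarith [hfpos t]
        · rw [if_neg (fun h => hP h.2)]
          have hg := g_zero t.1 t.2.1 k k' t.2.2 E hij hP
          have hg' : ((gamma t.1 t.2.1 t.2.2 R : ℝ) + (gamma t.1 t.2.1 t.2.2 R' : ℝ))
              - ((gamma t.1 t.2.1 t.2.2 E : ℝ) + (gamma t.1 t.2.1 t.2.2 (R ∪ R') : ℝ)) = 0 := by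
            rw [hUE, hRE, hR'E]
            exact sub_eq_zero.mpr (by exact_mod_cast hg)
          rw [hg', mul_zero, zero_add]
    have hsum1 := Finset.sum_le_sum hpt
    rw [Finset.sum_add_distrib] at hsum1
    have e1 : ∑ t ∈ I, (if t = b then 2 * f t else 0) = 2 * f b := by
      rw [Finset.sum_ite_eq' I b (fun t => 2 * f t)]
      exact if_pos hmem
    have e2 : ∑ t ∈ I, (if t ≠ b ∧ (t.1 ≤ k ∧ k' ≤ t.2.1 ∧
          E ∩ Finset.Ioo k k' = t.2.2 ∩ Finset.Ioo k k') then -f t else 0)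
        = -∑ t ∈ I.filter (fun t => t ≠ b ∧ (t.1 ≤ k ∧ k' ≤ t.2.1 ∧
          E ∩ Finset.Ioo k k' = t.2.2 ∩ Finset.Ioo k k')), f t := by
      rw [← Finset.sum_filter, Finset.sum_neg_distrib]
    have hsub : I.filter (fun t => t ≠ b ∧ (t.1 ≤ k ∧ k' ≤ t.2.1 ∧
          E ∩ Finset.Ioo k k' = t.2.2 ∩ Finset.Ioo k k'))
        ⊆ (shardFinset n).filter (fun t' => t' ≠ b ∧ t'.1 ≤ b.1 ∧ b.2.1 ≤ t'.2.1 ∧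
          b.2.2 = t'.2.2 ∩ Finset.Ioo b.1 b.2.1) := by
      intro t ht
      obtain ⟨htI, hne, h1, h2, h3⟩ := Finset.mem_filter.mp ht
      exact Finset.mem_filter.mpr ⟨hI htI, hne, h1, h2, h3⟩
    have hsub2 : ∑ t ∈ I.filter (fun t => t ≠ b ∧ (t.1 ≤ k ∧ k' ≤ t.2.1 ∧
          E ∩ Finset.Ioo k k' = t.2.2 ∩ Finset.Ioo k k')), f t
        ≤ ∑ t' ∈ (shardFinset n).filter (fun t' => t' ≠ b ∧ t'.1 ≤ b.1 ∧ b.2.1 ≤ t'.2.1 ∧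
          b.2.2 = t'.2.2 ∩ Finset.Ioo b.1 b.2.1), f t' :=
      Finset.sum_le_sum_of_subset_of_nonneg hsub (fun t _ _ => (hfpos t).le)
    have hdb := hdom b hbShard
    have hfb := hfpos b
    have hlt : quotientHeight f I E + quotientHeight f I (R ∪ R')
        < quotientHeight f I R + quotientHeight f I R' := by
      rw [e1, e2] at hsum1
      linarith [key, hsum1, hsub2, hdb, hfb]
    refine ⟨hlt.le, ?_, fun hnot => absurd hmem hnot⟩
    intro heq
    exact absurd heq (by linarith)
  · -- the shard does not belong to I : equality
    have hz : ∀ t ∈ I, f t * (((gamma t.1 t.2.1 t.2.2 R : ℝ) + (gamma t.1 t.2.1 t.2.2 R' : ℝ))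
          - ((gamma t.1 t.2.1 t.2.2 E : ℝ) + (gamma t.1 t.2.1 t.2.2 (R ∪ R') : ℝ))) = 0 := by
      intro t ht
      have hij : t.1 < t.2.1 := (Finset.mem_filter.mp (hI ht)).2.1
      have hP : ¬(t.1 ≤ k ∧ k' ≤ t.2.1 ∧
          E ∩ Finset.Ioo k k' = t.2.2 ∩ Finset.Ioo k k') :=
        fun hc => hmem (hup t ht b hbShard hc)
      have hg := g_zero t.1 t.2.1 k k' t.2.2 E hij hP
      have hg' : ((gamma t.1 t.2.1 t.2.2 R : ℝ) + (gamma t.1 t.2.1 t.2.2 R' : ℝ))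
          - ((gamma t.1 t.2.1 t.2.2 E : ℝ) + (gamma t.1 t.2.1 t.2.2 (R ∪ R') : ℝ)) = 0 := by
        rw [hUE, hRE, hR'E]
        exact sub_eq_zero.mpr (by exact_mod_cast hg)
      rw [hg', mul_zero]
    have hD : quotientHeight f I R + quotientHeight f I R'
        - (quotientHeight f I E + quotientHeight f I (R ∪ R')) = 0 :=
      key.trans (Finset.sum_eq_zero hz)
    exact ⟨by linarith, fun _ => hmem, fun _ => by linarith⟩
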